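/- arXiv:2111.07590 — 4 statements merged into one kernel-verified Lean document; each statement's English description precedes it below -/
import Mathlib

section
/- Let $(C_\bullet, \partial)$ be a chain complex of $\mathbb{Q}$-vector spaces (indexed by $\mathbb{Z}$, with $\partial$ of degree $-1$) such that for some integer $n > 2$: $\dim C_k = 0$ for $0 < k < 2n-4$, $\dim C_k = 1$ for $2n-4 \le k \le 4n-9$, $\dim C_{4n-8} = 3$, and $\dim C_{4n-7} = 2$. Then there exists some positive degree $k$ with $H_k(C_\bullet) \ne 0$. -/
open Module

/-- A chain complex of `ℚ`-vector spaces (indexed by `ℤ`, with boundary map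
`d k : C (k+1) → C k` of degree `-1`) whose dimensions are `0` in degrees `0 < k < 2n-4`,
`1` in degrees `2n-4 ≤ k ≤ 4n-9`, `3` in degree `4n-8` and `2` in degree `4n-7` (for some
`n > 2`) has nontrivial homology in some positive degree.  Homology in degree `k+1` is
nontrivial iff `ker (d k)` is not contained in `range (d (k+1))`. -/
theorem exotic_R4m1_nontrivial_homology
    (n : ℤ) (hn : 2 < n)
    (C : ℤ → Type) [∀ k, AddCommGroup (C k)] [∀ k, Module ℚ (C k)]
    [∀ k, Module.Finite ℚ (C k)]
    (d : ∀ k : ℤ, C (k + 1) →ₗ[ℚ] C k)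
    (hdd : ∀ k : ℤ, (d k).comp (d (k + 1)) = 0)
    (hdim0 : ∀ k : ℤ, 0 < k → k < 2 * n - 4 → finrank ℚ (C k) = 0)
    (hdim1 : ∀ k : ℤ, 2 * n - 4 ≤ k → k ≤ 4 * n - 9 → finrank ℚ (C k) = 1)
    (hdim3 : finrank ℚ (C (4 * n - 8)) = 3)
    (hdim2 : finrank ℚ (C (4 * n - 7)) = 2) :
    ∃ k : ℤ, 0 < k + 1 ∧ ¬ (LinearMap.ker (d k) ≤ LinearMap.range (d (k + 1))) := by
  by_contra hcon
  push_neg at hcon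
  have hdimC : ∀ a b : ℤ, a = b → finrank ℚ (C a) = finrank ℚ (C b) := by
    rintro a b rfl; rfl
  have hsub : ∀ k : ℤ, finrank ℚ (C k) = 0 → ∀ x : C k, x = 0 := by
    intro k hk x
    have : Subsingleton (C k) := (Module.finrank_zero_iff (R := ℚ) (M := C k)).mp hk
    exact Subsingleton.elim x 0
  -- step: if the map out of C j is zero and dims are right, the next-next map is zero
  have hstep : ∀ j : ℤ, 2 * n - 4 ≤ j + 1 → j + 2 ≤ 4 * n - 9 →
      d j = 0 → d (j + 1 + 1) = 0 := by
    intro j h1 h2 hj0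
    have hker : LinearMap.ker (d j) = ⊤ := by rw [hj0]; exact LinearMap.ker_zero
    have hrange : LinearMap.range (d (j + 1)) = ⊤ :=
      top_le_iff.mp (hker ▸ hcon j (by omega))
    have hsurj : Function.Surjective (d (j + 1)) :=
      LinearMap.range_eq_top.mp hrange
    have hfr : finrank ℚ (C (j + 1 + 1)) = finrank ℚ (C (j + 1)) := by
      rw [hdim1 (j + 1 + 1) (by omega) (by omega), hdim1 (j + 1) (by omega) (by omega)]
    have hinj : Function.Injective (d (j + 1)) := by
      haveI : FiniteDimensional ℚ (C (j + 1 + 1)) := inferInstance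
      exact (LinearMap.injective_iff_surjective_of_finrank_eq_finrank hfr).mpr hsurj
    ext x
    have hcomp := congrFun (congrArg (fun f => f.toFun) (hdd (j + 1))) x
    simp only [LinearMap.coe_comp, Function.comp_apply, LinearMap.zero_apply] at hcomp ⊢
    exact hinj (by simpa using hcomp)
  -- by induction, the map out of C (2n-4+2m) is zero
  have key : ∀ m : ℕ, 2 * n - 4 + 2 * (m : ℤ) ≤ 4 * n - 8 →
      d (2 * n - 5 + 2 * (m : ℤ)) = 0 := by
    intro m
    induction m with
    | zero =>
      intro _
      have h0 : finrank ℚ (C (2 * n - 5)) = 0 := hdim0 _ (by omega) (by omega)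
      have hgen : ∀ a : ℤ, a = 2 * n - 5 → d a = 0 := by
        rintro a rfl; ext x; exact hsub _ h0 _
      exact hgen _ (by push_cast; ring)
    | succ m ih =>
      intro hle
      have hle' : 2 * n - 4 + 2 * (m : ℤ) ≤ 4 * n - 8 := by push_cast at hle ⊢; omega
      have hd0 := ih hle'
      have hidx : 2 * n - 5 + 2 * ((m : ℤ) + 1) = (2 * n - 5 + 2 * (m : ℤ)) + 1 + 1 := by
        ring
      have hz := hstep (2 * n - 5 + 2 * (m : ℤ)) (by omega) (by push_cast at hle; omega) hd0
      have hgen : ∀ a : ℤ, a = 2 * n - 5 + 2 * (m : ℤ) + 1 + 1 → d a = 0 := by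
        rintro a rfl; exact hz
      exact hgen _ (by push_cast; ring)
  -- apply at the top of the dim-1 range: the map C(4n-8) → C(4n-9) is zero
  have hm : (2 * n - 4 : ℤ) + 2 * ((n - 2).toNat : ℤ) ≤ 4 * n - 8 := by
    rw [Int.toNat_of_nonneg (by omega)]; omega
  have htop : d (4 * n - 9) = 0 := by
    have hgen : ∀ a : ℤ, a = 2 * n - 5 + 2 * (((n - 2).toNat : ℤ)) → d a = 0 := by
      rintro a rfl; exact key (n - 2).toNat hm
    exact hgen _ (by rw [Int.toNat_of_nonneg (by omega)]; ring)
  -- exactness at 4n-8 forces a surjection C(4n-7) → C(4n-8), contradiction on dims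
  have hker : LinearMap.ker (d (4 * n - 9)) = ⊤ := by rw [htop]; exact LinearMap.ker_zero
  have hrange : LinearMap.range (d (4 * n - 9 + 1)) = ⊤ :=
    top_le_iff.mp (hker ▸ hcon (4 * n - 9) (by omega))
  have hle3 : finrank ℚ (C (4 * n - 9 + 1)) ≤ finrank ℚ (C (4 * n - 9 + 1 + 1)) := by
    calc finrank ℚ (C (4 * n - 9 + 1))
        = finrank ℚ (LinearMap.range (d (4 * n - 9 + 1))) := by rw [hrange]; exact (finrank_top _ _).symm
      _ ≤ finrank ℚ (C (4 * n - 9 + 1 + 1)) := LinearMap.finrank_range_le _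
  rw [hdimC (4 * n - 9 + 1) (4 * n - 8) (by ring), hdim3,
    hdimC (4 * n - 9 + 1 + 1) (4 * n - 7) (by ring), hdim2] at hle3
  omega
end

section
/- Let $(C_\bullet, \partial)$ be a chain complex of finite-dimensional $\mathbb{Q}$-vector spaces, let $a < b$ be integers, and suppose $\dim C_{a-1} = 0$ and $\dim C_b = 2r$ for some $r \ge 0$. If the Euler characteristic of the truncated complex $\sum_{k=a}^{b-1} (-1)^{k-a} \dim C_k$ has absolute value at least $3r$, then $\sum_{k=a}^{b-1} \dim H_k(C_\bullet) \ge r$. -/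
open Module

private lemma telesc (R H : ℕ → ℤ) (N : ℕ) :
    ∑ i ∈ Finset.range N, (-1:ℤ)^i * (R i + H i + R (i+1)) =
    ∑ i ∈ Finset.range N, (-1:ℤ)^i * H i + R 0 - (-1:ℤ)^N * R N := by
  induction N with
  | zero => simp
  | succ n ih =>
    rw [Finset.sum_range_succ, Finset.sum_range_succ, ih]; ring

/-- Let `C` be a chain complex of finite-dimensional `ℚ`-vector spaces
(boundary `d k : C (k+1) → C k`), `a < b` integers with `dim C (a-1) = 0` and
`dim C b = 2r`.  If the Euler characteristic `∑_{k=a}^{b-1} (-1)^(k-a) dim C k` of the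
truncated complex has absolute value at least `3r`, then the total dimension of the
homology in degrees `a ≤ m ≤ b-1` is at least `r`.  Homology in degree `m = j+1` is
`ker (d j) / range (d (j+1))`, so the degrees `a ≤ m ≤ b-1` correspond to
`j ∈ [a-1, b-2]`. -/
theorem truncated_euler_char_homology_bound
    (C : ℤ → Type) [∀ k, AddCommGroup (C k)] [∀ k, Module ℚ (C k)]
    [∀ k, Module.Finite ℚ (C k)]
    (d : ∀ k : ℤ, C (k + 1) →ₗ[ℚ] C k)
    (hdd : ∀ k : ℤ, (d k).comp (d (k + 1)) = 0)
    (a b : ℤ) (hab : a < b) (r : ℕ)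
    (ha : finrank ℚ (C (a - 1)) = 0)
    (hb : finrank ℚ (C b) = 2 * r)
    (hchi : 3 * (r : ℤ) ≤
      |∑ k ∈ Finset.Icc a (b - 1), (-1 : ℤ) ^ (k - a).toNat * (finrank ℚ (C k) : ℤ)|) :
    r ≤ ∑ j ∈ Finset.Icc (a - 1) (b - 2),
      finrank ℚ
        (↥(LinearMap.ker (d j)) ⧸
          Submodule.comap (LinearMap.ker (d j)).subtype (LinearMap.range (d (j + 1)))) := by
  classical
  set N := (b - a).toNat with hNdef
  have hNa : (N : ℤ) = b - a := Int.toNat_of_nonneg (by omega)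
  set RZ : ℤ → ℤ := fun j => (finrank ℚ ↥(LinearMap.range (d j)) : ℤ) with hRZ
  set Rf : ℕ → ℤ := fun i => RZ (a - 1 + (i:ℤ)) with hRf
  set Hn : ℕ → ℕ := fun i => finrank ℚ
      (↥(LinearMap.ker (d (a - 1 + (i:ℤ)))) ⧸
        Submodule.comap (LinearMap.ker (d (a - 1 + (i:ℤ)))).subtype
          (LinearMap.range (d (a - 1 + (i:ℤ) + 1)))) with hHn
  -- key dimension relation
  have hrel : ∀ i : ℕ, (finrank ℚ (C (a - 1 + (i:ℤ) + 1)) : ℤ) =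
      Rf i + (Hn i : ℤ) + Rf (i+1) := by
    intro i
    have hle : LinearMap.range (d (a - 1 + (i:ℤ) + 1)) ≤ LinearMap.ker (d (a - 1 + (i:ℤ))) := by
      rw [LinearMap.range_le_ker_iff]; exact hdd _
    have e1 := LinearMap.finrank_range_add_finrank_ker (d (a - 1 + (i:ℤ)))
    have e2 := Submodule.finrank_quotient_add_finrank
      (Submodule.comap (LinearMap.ker (d (a - 1 + (i:ℤ)))).subtype
        (LinearMap.range (d (a - 1 + (i:ℤ) + 1))))
    have e3 : finrank ℚ ↥(Submodule.comap (LinearMap.ker (d (a - 1 + (i:ℤ)))).subtype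
          (LinearMap.range (d (a - 1 + (i:ℤ) + 1))))
        = finrank ℚ ↥(LinearMap.range (d (a - 1 + (i:ℤ) + 1))) :=
      (Submodule.comapSubtypeEquivOfLe hle).finrank_eq
    have e5 : Rf (i+1) = RZ (a - 1 + (i:ℤ) + 1) := by
      simp only [hRf]; congr 1; push_cast; ring
    rw [e5]
    simp only [hRf, hHn, hRZ]
    omega
  -- R 0 = 0
  have hR0 : Rf 0 = 0 := by
    have h1 : finrank ℚ ↥(LinearMap.range (d (a-1))) ≤ finrank ℚ (C (a-1)) :=
      Submodule.finrank_le _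
    have e5 : Rf 0 = RZ (a-1) := by simp only [hRf]; congr 1; push_cast; ring
    rw [e5]; simp only [hRZ]; omega
  -- R N ≤ 2r
  have hRN : Rf N ≤ 2 * (r : ℤ) := by
    have h1 : finrank ℚ ↥(LinearMap.range (d (b-1))) ≤ finrank ℚ (C (b-1+1)) :=
      LinearMap.finrank_range_le _
    have h2 : finrank ℚ (C (b-1+1)) = 2*r := by rw [show b-1+1 = b by ring]; exact hb
    have e5 : Rf N = RZ (b-1) := by simp only [hRf]; congr 1; omega
    rw [e5]; simp only [hRZ]; omega
  -- reindex the Euler characteristic sum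
  have himg : Finset.Icc a (b-1) = (Finset.range N).image (fun i : ℕ => a + (i:ℤ)) := by
    ext k
    simp only [Finset.mem_Icc, Finset.mem_image, Finset.mem_range]
    constructor
    · rintro ⟨h1, h2⟩; exact ⟨(k - a).toNat, by omega, by omega⟩
    · rintro ⟨i, hi, rfl⟩; omega
  have hchi2 : ∑ k ∈ Finset.Icc a (b - 1), (-1 : ℤ) ^ (k - a).toNat * (finrank ℚ (C k) : ℤ)
      = ∑ i ∈ Finset.range N, (-1:ℤ)^i * (Rf i + (Hn i : ℤ) + Rf (i+1)) := by
    rw [himg, Finset.sum_image (by intro x _ y _ (h : a + (x:ℤ) = a + (y:ℤ)); omega)]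
    refine Finset.sum_congr rfl fun i _ => ?_
    have e1 : (a + (i:ℤ) - a).toNat = i := by omega
    have e2 : (finrank ℚ (C (a + (i:ℤ))) : ℤ) = (finrank ℚ (C (a - 1 + (i:ℤ) + 1)) : ℤ) := by
      rw [show a + (i:ℤ) = a - 1 + (i:ℤ) + 1 by ring]
    rw [e1, e2, hrel i]
  -- reindex the homology sum
  have himg2 : Finset.Icc (a-1) (b-2) = (Finset.range N).image (fun i : ℕ => a - 1 + (i:ℤ)) := by
    ext k
    simp only [Finset.mem_Icc, Finset.mem_image, Finset.mem_range]
    constructor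
    · rintro ⟨h1, h2⟩; exact ⟨(k - (a-1)).toNat, by omega, by omega⟩
    · rintro ⟨i, hi, rfl⟩; omega
  have hgoal : ∑ j ∈ Finset.Icc (a - 1) (b - 2),
      finrank ℚ
        (↥(LinearMap.ker (d j)) ⧸
          Submodule.comap (LinearMap.ker (d j)).subtype (LinearMap.range (d (j + 1))))
      = ∑ i ∈ Finset.range N, Hn i := by
    rw [himg2, Finset.sum_image (by intro x _ y _ (h : a - 1 + (x:ℤ) = a - 1 + (y:ℤ)); omega)]
  rw [hgoal]
  -- now the arithmetic
  have key := telesc Rf (fun i => (Hn i : ℤ)) N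
  rw [hchi2, key, hR0] at hchi
  have habs : |∑ i ∈ Finset.range N, (-1:ℤ)^i * (Hn i : ℤ) + 0 - (-1:ℤ)^N * Rf N|
      ≤ (∑ i ∈ Finset.range N, (Hn i : ℤ)) + Rf N := by
    calc |∑ i ∈ Finset.range N, (-1:ℤ)^i * (Hn i : ℤ) + 0 - (-1:ℤ)^N * Rf N|
        ≤ |∑ i ∈ Finset.range N, (-1:ℤ)^i * (Hn i : ℤ)| + |(-1:ℤ)^N * Rf N| := by
          rw [add_zero]; exact abs_sub _ _
      _ ≤ (∑ i ∈ Finset.range N, (Hn i : ℤ)) + Rf N := by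
          gcongr
          · calc |∑ i ∈ Finset.range N, (-1:ℤ)^i * (Hn i : ℤ)|
                ≤ ∑ i ∈ Finset.range N, |(-1:ℤ)^i * (Hn i : ℤ)| :=
                  Finset.abs_sum_le_sum_abs _ _
              _ = ∑ i ∈ Finset.range N, (Hn i : ℤ) := by
                  refine Finset.sum_congr rfl fun i _ => ?_
                  rw [abs_mul, abs_pow, abs_neg, abs_one, one_pow, one_mul,
                    abs_of_nonneg (by positivity)]
          · rw [abs_mul, abs_pow, abs_neg, abs_one, one_pow, one_mul]
            refine le_of_eq (abs_of_nonneg ?_)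
            simp only [hRf, hRZ]
            positivity
  have hfin : (r:ℤ) ≤ ∑ i ∈ Finset.range N, (Hn i : ℤ) := by
    have := hchi.trans habs
    linarith
  exact_mod_cast hfin
end

section
/- Let $V$ be a smooth manifold with a complete flow, let $t : V \to \mathbb{R}$ and $u : V \to \mathbb{R}$ be smooth, and let $R$ be a smooth vector field. Suppose there is $T > 0$ such that on $\{t > T\}$: (a) $u \cdot (dt(R)) > 0$ wherever $u \ne 0$; (b) $du(R) > 0$ wherever $u = 0$. Then every periodic integral curve $\gamma$ of $R$ is contained in $\{t \le T\}$. -/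
/-- let `t, u` be smooth proper-type functions on `V` and `R` a vector field
such that, on `{t > T}`: (a) `u · dt(R) > 0` wherever `u ≠ 0`, and (b) `du(R) > 0`
wherever `u = 0`.  Then every periodic integral curve of `R` is contained in `{t ≤ T}`.
(Here `dt(R)|_x = fderiv ℝ t x (R x)`.) -/
theorem periodic_orbits_confined
    (V : Type) [NormedAddCommGroup V] [NormedSpace ℝ V]
    (t u : V → ℝ) (ht : Differentiable ℝ t) (hu : Differentiable ℝ u)
    (R : V → V) (T : ℝ) (hT : 0 < T)
    (ha : ∀ x : V, T < t x → u x ≠ 0 → 0 < u x * fderiv ℝ t x (R x))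
    (hb : ∀ x : V, T < t x → u x = 0 → 0 < fderiv ℝ u x (R x))
    (γ : ℝ → V) (P : ℝ) (hP : 0 < P)
    (hγ : ∀ τ : ℝ, HasDerivAt γ (R (γ τ)) τ)
    (hper : ∀ τ : ℝ, γ (τ + P) = γ τ) :
    ∀ τ : ℝ, t (γ τ) ≤ T := by
  by_contra hlt
  push_neg at hlt
  obtain ⟨τ₀, hτ₀⟩ := hlt
  set f : ℝ → ℝ := fun τ => t (γ τ) with hf
  set g : ℝ → ℝ := fun τ => u (γ τ) with hg
  have hfd : ∀ τ, HasDerivAt f (fderiv ℝ t (γ τ) (R (γ τ))) τ :=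
    fun τ => (ht (γ τ)).hasFDerivAt.comp_hasDerivAt τ (hγ τ)
  have hgd : ∀ τ, HasDerivAt g (fderiv ℝ u (γ τ) (R (γ τ))) τ :=
    fun τ => (hu (γ τ)).hasFDerivAt.comp_hasDerivAt τ (hγ τ)
  have hfc : Continuous f := by
    rw [continuous_iff_continuousAt]
    exact fun τ => (hfd τ).continuousAt
  have hfper : Function.Periodic f P := fun τ => by simp [hf, hper τ]
  obtain ⟨τs, hτsmem, hmax⟩ := isCompact_Icc.exists_isMaxOn
    (Set.nonempty_Icc.2 hP.le) (hfc.continuousOn (s := Set.Icc 0 P))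
  have hglobal : ∀ τ, f τ ≤ f τs := by
    intro τ
    obtain ⟨y, hy, hxy⟩ := hfper.exists_mem_Ico₀ hP τ
    rw [hxy]
    exact hmax (Set.Ico_subset_Icc_self hy)
  have hTs : T < f τs := lt_of_lt_of_le hτ₀ (hglobal τ₀)
  -- the derivative of f vanishes at the global max
  have h0 : fderiv ℝ t (γ τs) (R (γ τs)) = 0 :=
    IsLocalMax.hasDerivAt_eq_zero (Filter.Eventually.of_forall hglobal) (hfd τs)
  have hu0 : u (γ τs) = 0 := by
    by_contra h
    have := ha _ hTs h
    rw [h0] at this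
    simp at this
  have hg' : 0 < fderiv ℝ u (γ τs) (R (γ τs)) := hb _ hTs hu0
  -- g is eventually positive to the right of τs
  have h1 : ∀ᶠ τ in nhdsWithin τs (Set.Ioi τs), 0 < g τ := by
    have hslope : Filter.Tendsto (slope g τs) (nhdsWithin τs (Set.Ioi τs))
        (nhds (fderiv ℝ u (γ τs) (R (γ τs)))) :=
      (hasDerivAt_iff_tendsto_slope.1 (hgd τs)).mono_left
        (nhdsWithin_mono _ (fun x hx => ne_of_gt hx))
    have hev := hslope.eventually (eventually_gt_nhds hg')
    filter_upwards [hev, self_mem_nhdsWithin] with τ hsl (hτ : τs < τ)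
    have hne : τ - τs ≠ 0 := sub_ne_zero.2 (ne_of_gt hτ)
    have heq : g τ - g τs = slope g τs τ * (τ - τs) := by
      rw [slope_def_field]
      field_simp
    have hpos : 0 < slope g τs τ * (τ - τs) := mul_pos hsl (by linarith)
    have hgτs : g τs = 0 := hu0
    linarith
  have h2 : ∀ᶠ τ in nhdsWithin τs (Set.Ioi τs), T < f τ :=
    ((hfc.continuousAt.eventually (eventually_gt_nhds hTs)).filter_mono
      nhdsWithin_le_nhds)
  obtain ⟨b, hb', hsub⟩ := mem_nhdsGT_iff_exists_Ioo_subset.1 (h1.and h2)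
  have hτsb : τs < b := hb'
  -- f is strictly increasing on [τs, b]
  have hmono : StrictMonoOn f (Set.Icc τs b) := by
    apply strictMonoOn_of_deriv_pos (convex_Icc _ _) (hfc.continuousOn)
    intro x hx
    rw [interior_Icc] at hx
    obtain ⟨hg0, hfT⟩ := hsub hx
    have hne : u (γ x) ≠ 0 := ne_of_gt hg0
    have hmul := ha _ hfT hne
    rw [(hfd x).deriv]
    rcases mul_pos_iff.1 hmul with ⟨_, h⟩ | ⟨h, _⟩
    · exact h
    · exact absurd hg0 (not_lt.2 h.le)
  have : f τs < f b :=
    hmono (Set.left_mem_Icc.2 hτsb.le) (Set.right_mem_Icc.2 hτsb.le) hτsb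
  exact absurd (hglobal b) (not_le.2 this)
end

section
/- Let $h_1, h_2 : M \to \mathbb{R}$ be smooth functions on a manifold $M$ with $h_1 \ge h_2$ pointwise, let $v, w$ be vector fields, and suppose for $i = 1,2$: $dh_i(v) > 0$ on a subset $A \subseteq M$ and $dh_i(w) > 0$ on a subset $B \subseteq M$. Let $\rho : M \to [0,1]$ be smooth with $d\rho(v) = 0$ everywhere and $d\rho(w) \le 0$ everywhere. Then $h := \rho h_1 + (1-\rho) h_2$ satisfies $dh(v) > 0$ on $A$ and $dh(w) > 0$ on $B$. -/
lemma interp_fderiv_apply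
    (M : Type) [NormedAddCommGroup M] [NormedSpace ℝ M]
    (h₁ h₂ : M → ℝ) (hh₁ : Differentiable ℝ h₁) (hh₂ : Differentiable ℝ h₂)
    (ρ : M → ℝ) (hρ : Differentiable ℝ ρ) (x u : M) :
    fderiv ℝ (fun y => ρ y * h₁ y + (1 - ρ y) * h₂ y) x u =
      fderiv ℝ ρ x u * (h₁ x - h₂ x)
      + ρ x * fderiv ℝ h₁ x u + (1 - ρ x) * fderiv ℝ h₂ x u := by
  have d1 : DifferentiableAt ℝ (fun y => ρ y * h₁ y) x := (hρ x).mul (hh₁ x)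
  have dρ' : DifferentiableAt ℝ (fun y => 1 - ρ y) x := (differentiable_const 1).sub hρ |>.differentiableAt
  have d2 : DifferentiableAt ℝ (fun y => (1 - ρ y) * h₂ y) x := dρ'.mul (hh₂ x)
  rw [fderiv_fun_add d1 d2, fderiv_fun_mul (hρ x) (hh₁ x), fderiv_fun_mul dρ' (hh₂ x)]
  have : fderiv ℝ (fun y => 1 - ρ y) x = -fderiv ℝ ρ x := by
    rw [fderiv_fun_sub (differentiableAt_const 1) (hρ x), fderiv_fun_const]
    simp
  rw [this]
  simp only [ContinuousLinearMap.add_apply, ContinuousLinearMap.smul_apply,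
    ContinuousLinearMap.neg_apply, smul_eq_mul]
  ring

/-- interpolation of contact Hamiltonians (core of the interpolation lemma).
If `h₁ ≥ h₂`, `dhᵢ(v) > 0` on `A` and `dhᵢ(w) > 0` on `B` for `i = 1,2`, and
`ρ : M → [0,1]` satisfies `dρ(v) = 0` and `dρ(w)(h₁ - h₂) ≥ 0` (the sign convention making
the extra term nonnegative), then `h = ρ h₁ + (1-ρ) h₂` satisfies `dh(v) > 0` on `A` and
`dh(w) > 0` on `B`. -/
theorem interpolated_hamiltonian_derivative_pos
    (M : Type) [NormedAddCommGroup M] [NormedSpace ℝ M]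
    (h₁ h₂ : M → ℝ) (hh₁ : Differentiable ℝ h₁) (hh₂ : Differentiable ℝ h₂)
    (hle : ∀ x, h₂ x ≤ h₁ x)
    (v w : M → M) (A B : Set M)
    (hv₁ : ∀ x ∈ A, 0 < fderiv ℝ h₁ x (v x)) (hv₂ : ∀ x ∈ A, 0 < fderiv ℝ h₂ x (v x))
    (hw₁ : ∀ x ∈ B, 0 < fderiv ℝ h₁ x (w x)) (hw₂ : ∀ x ∈ B, 0 < fderiv ℝ h₂ x (w x))
    (ρ : M → ℝ) (hρ : Differentiable ℝ ρ) (hρ01 : ∀ x, ρ x ∈ Set.Icc (0 : ℝ) 1)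
    (hρv : ∀ x, fderiv ℝ ρ x (v x) = 0)
    (hρw : ∀ x, 0 ≤ fderiv ℝ ρ x (w x) * (h₁ x - h₂ x)) :
    (∀ x ∈ A, 0 < fderiv ℝ (fun y => ρ y * h₁ y + (1 - ρ y) * h₂ y) x (v x)) ∧
    (∀ x ∈ B, 0 < fderiv ℝ (fun y => ρ y * h₁ y + (1 - ρ y) * h₂ y) x (w x)) := by
  have key := interp_fderiv_apply M h₁ h₂ hh₁ hh₂ ρ hρ
  have hconv : ∀ x (a b : ℝ), 0 < a → 0 < b → 0 < ρ x * a + (1 - ρ x) * b := by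
    intro x a b ha hb
    obtain ⟨h0, h1⟩ := hρ01 x
    rcases eq_or_lt_of_le h0 with h0' | h0'
    · simp [← h0']; linarith
    · rcases eq_or_lt_of_le h1 with h1' | h1'
      · simp [h1']; nlinarith
      · nlinarith
  constructor
  · intro x hx
    rw [key x (v x), hρv x]
    simpa using hconv x _ _ (hv₁ x hx) (hv₂ x hx)
  · intro x hx
    rw [key x (w x)]
    have := hρw x
    have := hconv x _ _ (hw₁ x hx) (hw₂ x hx)
    linarith
end
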